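/- Let F = (v_1 ⊂ ⋯ ⊂ v_n) be a flag in standard form in ℂ^n containing hat vectors: say the hat vectors occur at positions i_k < i_{k-1} < ⋯ < i_1 with v_{i_m} = ê_{j_m} and j_k > j_{k-1} > ⋯ > j_1, and v_p = e_n (so p > i_1), all other v_m being standard basis vectors. Let F̃ be the flag obtained from F by replacing the entry at position i_k by e_n, the entry at position i_m by e_{j_{m+1}} for m = 1,…,k−1, and the entry at position p by e_{j_1}, leaving all other entries unchanged. Then F̃ ∈ B·F, F̃ is fixed by every invertible diagonal matrix, and F̃ is the unique flag in B·F fixed by all of H. -/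

import Mathlib

/-
Common setup.  The ambient space is `ℂ^(n+1)` (so the paper's `n` is our `n + 1`,
and the paper's hypothesis `n ≥ 2` becomes `1 ≤ n`).  Coordinates are indexed by
`Fin (n+1)`, zero-indexed, so the paper's index `i ∈ {1, …, n}` is our `i - 1`,
and the paper's `e_n` is `e (Fin.last n)`.
-/

noncomputable section

namespace ShareshianPairs

/-- The standard basis vector `e i` of `ℂ^(n+1)`. -/
def e (n : ℕ) (i : Fin (n + 1)) : Fin (n + 1) → ℂ := Pi.single i 1

/-- The hat vector `ê j = e j + e n`. -/
def hatE (n : ℕ) (j : Fin (n + 1)) : Fin (n + 1) → ℂ := e n j + e n (Fin.last n)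

/-- The flag `(v 0 ⊂ v 1 ⊂ ⋯)` spanned by a sequence of vectors. -/
def flagOf (n : ℕ) (v : Fin (n + 1) → Fin (n + 1) → ℂ) :
    Fin (n + 1) → Submodule ℂ (Fin (n + 1) → ℂ) :=
  fun i => Submodule.span ℂ (v '' {j | j ≤ i})

/-- A full flag in `ℂ^(n+1)`. -/
def IsFlag (n : ℕ) (V : Fin (n + 1) → Submodule ℂ (Fin (n + 1) → ℂ)) : Prop :=
  Monotone V ∧ ∀ i : Fin (n + 1), Module.finrank ℂ (V i) = (i : ℕ) + 1

/-- The action of `GL(n+1, ℂ)` on flags. -/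
def actFlag (n : ℕ) (g : Matrix.GeneralLinearGroup (Fin (n + 1)) ℂ)
    (V : Fin (n + 1) → Submodule ℂ (Fin (n + 1) → ℂ)) :
    Fin (n + 1) → Submodule ℂ (Fin (n + 1) → ℂ) :=
  fun i => (V i).map (Matrix.mulVecLin (g : Matrix (Fin (n + 1)) (Fin (n + 1)) ℂ))

/-- Membership in the Borel subgroup `B` of invertible upper triangular matrices. -/
def InB (n : ℕ) (g : Matrix.GeneralLinearGroup (Fin (n + 1)) ℂ) : Prop :=
  ∀ i j : Fin (n + 1), j < i → (g : Matrix (Fin (n + 1)) (Fin (n + 1)) ℂ) i j = 0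

/-- Membership in `B_{n-1} ⊂ B` : upper triangular, last diagonal entry `1`,
remaining last-column entries `0`. -/
def InBsmall (n : ℕ) (g : Matrix.GeneralLinearGroup (Fin (n + 1)) ℂ) : Prop :=
  InB n g ∧
    (g : Matrix (Fin (n + 1)) (Fin (n + 1)) ℂ) (Fin.last n) (Fin.last n) = 1 ∧
    ∀ i : Fin (n + 1), i ≠ Fin.last n →
      (g : Matrix (Fin (n + 1)) (Fin (n + 1)) ℂ) i (Fin.last n) = 0

/-- The spanning vectors of the flag `E* = (e_n ⊂ e_1 ⊂ ⋯ ⊂ e_{n-1})`. -/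
def eStarVec (n : ℕ) : Fin (n + 1) → Fin (n + 1) → ℂ :=
  fun i => Fin.cases (e n (Fin.last n)) (fun j => e n j.castSucc) i

/-- Membership in `B*`, the stabilizer of the flag `E*`. -/
def InBstar (n : ℕ) (g : Matrix.GeneralLinearGroup (Fin (n + 1)) ℂ) : Prop :=
  actFlag n g (flagOf n (eStarVec n)) = flagOf n (eStarVec n)

/-- Membership in `H`, the invertible diagonal matrices. -/
def InH (n : ℕ) (g : Matrix.GeneralLinearGroup (Fin (n + 1)) ℂ) : Prop :=
  ∀ i j : Fin (n + 1), i ≠ j → (g : Matrix (Fin (n + 1)) (Fin (n + 1)) ℂ) i j = 0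

/-- The orbit of a flag under the subgroup `{g | P g}`. -/
def orbit (n : ℕ) (P : Matrix.GeneralLinearGroup (Fin (n + 1)) ℂ → Prop)
    (V : Fin (n + 1) → Submodule ℂ (Fin (n + 1) → ℂ)) :
    Set (Fin (n + 1) → Submodule ℂ (Fin (n + 1) → ℂ)) :=
  {W | ∃ g : Matrix.GeneralLinearGroup (Fin (n + 1)) ℂ, P g ∧ W = actFlag n g V}

/-- A sequence of spanning vectors is in standard form. -/
def IsStdForm (n : ℕ) (v : Fin (n + 1) → Fin (n + 1) → ℂ) : Prop :=
  LinearIndependent ℂ v ∧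
  (∀ i, (∃ j, v i = e n j) ∨ (∃ j, j ≠ Fin.last n ∧ v i = hatE n j)) ∧
  (∃ i, v i = e n (Fin.last n)) ∧
  (∀ i k : Fin (n + 1), v i = e n (Fin.last n) → i < k → ∃ j, v k = e n j) ∧
  (∀ i k ji jk : Fin (n + 1), i < k → ji ≠ Fin.last n → jk ≠ Fin.last n →
    v i = hatE n ji → v k = hatE n jk → jk < ji)

/-- `vs` spans the flag `F*` : each hat vector `ê j` of `v` is replaced by `e j`,
all other entries are unchanged. -/
def StarPair (n : ℕ) (v vs : Fin (n + 1) → Fin (n + 1) → ℂ) : Prop :=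
  ∀ q : Fin (n + 1),
    ((∃ t, v q = e n t) → vs q = v q) ∧
    (∀ j : Fin (n + 1), j ≠ Fin.last n → v q = hatE n j → vs q = e n j)

/-- `vt` spans the flag `F̃` attached to the standard-form flag spanned by `v`. -/
def TildePair (n : ℕ) (v vt : Fin (n + 1) → Fin (n + 1) → ℂ) : Prop :=
  ((∀ q, ∃ t, v q = e n t) ∧ vt = v) ∨
  (∃ (k : ℕ) (hk : 0 < k) (i j : Fin k → Fin (n + 1)) (p : Fin (n + 1)),
    StrictAnti i ∧ StrictMono j ∧
    (∀ m : Fin k, j m ≠ Fin.last n ∧ v (i m) = hatE n (j m)) ∧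
    v p = e n (Fin.last n) ∧
    (∀ q : Fin (n + 1), (∀ m : Fin k, q ≠ i m) → ∃ t, v q = e n t) ∧
    vt (i ⟨k - 1, Nat.sub_lt hk Nat.one_pos⟩) = e n (Fin.last n) ∧
    (∀ (m : Fin k) (h : (m : ℕ) + 1 < k), vt (i m) = e n (j ⟨(m : ℕ) + 1, h⟩)) ∧
    vt p = e n (j ⟨0, hk⟩) ∧
    (∀ q : Fin (n + 1), (∀ m : Fin k, q ≠ i m) → q ≠ p → vt q = v q))

/-- The `(n+1)`-cycle `σ`, zero-indexed version of the paper's `σ = (n, n-1, …, 1)`: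
`σ 0 = n` and `σ k = k - 1` for `k ≥ 1`. -/
def sigma (n : ℕ) : Equiv.Perm (Fin (n + 1)) := (finRotate (n + 1))⁻¹

/-- The cycle `τ_Δ = (n, j_k, …, j_2, j_1)` attached to a subset
`Δ = {j_1 < ⋯ < j_k < n} ∪ {n}`:  it sends each element of `Δ` to the next
smaller element (the smallest going back to the largest) and fixes everything else. -/
def tauDelta (n : ℕ) (Δ : Finset (Fin (n + 1))) : Equiv.Perm (Fin (n + 1)) :=
  ((Δ.sort (· ≤ ·)).formPerm)⁻¹

/-- `Δ` is a decreasing sequence for `w⁻¹`. -/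
def IsDecreasingFor (n : ℕ) (Δ : Finset (Fin (n + 1)))
    (w : Equiv.Perm (Fin (n + 1))) : Prop :=
  ∀ x ∈ Δ, ∀ y ∈ Δ, x < y → w⁻¹ y < w⁻¹ x

/-- The spanning vectors of the flag `y(E*)`. -/
def eStarPermVec (n : ℕ) (y : Equiv.Perm (Fin (n + 1))) :
    Fin (n + 1) → Fin (n + 1) → ℂ :=
  fun i => Fin.cases (e n (y (Fin.last n))) (fun t => e n (y t.castSucc)) i

/-- Coxeter length = number of inversions. -/
def len (n : ℕ) (w : Equiv.Perm (Fin (n + 1))) : ℕ :=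
  (Finset.univ.filter
    (fun p : Fin (n + 1) × Fin (n + 1) => p.1 < p.2 ∧ w p.2 < w p.1)).card

/-- Length with respect to the set of simple reflections `S*`. -/
def lenStar (n : ℕ) (x : Equiv.Perm (Fin (n + 1))) : ℕ :=
  len n ((sigma n)⁻¹ * x * sigma n)

/-- Bruhat order on the symmetric group (tableau criterion):
`y ≤ w` iff `#{i ≤ p : y i ≤ q} ≥ #{i ≤ p : w i ≤ q}` for all `p, q`. -/
def bruhatLE (n : ℕ) (y w : Equiv.Perm (Fin (n + 1))) : Prop :=
  ∀ p q : Fin (n + 1),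
    (Finset.univ.filter (fun i => i ≤ p ∧ w i ≤ q)).card ≤
      (Finset.univ.filter (fun i => i ≤ p ∧ y i ≤ q)).card

/-- The total order `n ≺ 1 ≺ 2 ≺ ⋯ ≺ n - 1` (zero-indexed). -/
def precOrd (n : ℕ) (a b : Fin (n + 1)) : Prop :=
  finRotate (n + 1) a < finRotate (n + 1) b

/-- `(w, u*)` is a Shareshian pair. -/
def IsShPair (n : ℕ) (w u : Equiv.Perm (Fin (n + 1))) : Prop :=
  ∃ Δ : Finset (Fin (n + 1)), Fin.last n ∈ Δ ∧ IsDecreasingFor n Δ w ∧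
    u = tauDelta n Δ * w * (sigma n)⁻¹

/-- The matrix whose `i`-th column is `v i`. -/
def colMat (n : ℕ) (v : Fin (n + 1) → Fin (n + 1) → ℂ) :
    Matrix (Fin (n + 1)) (Fin (n + 1)) ℂ :=
  Matrix.of fun r c => v c r

/-- The double coset `{b₁ * g * b₂ | P b₁, Q b₂}` as a set of matrices. -/
def dblCoset (n : ℕ) (P Q : Matrix.GeneralLinearGroup (Fin (n + 1)) ℂ → Prop)
    (g : Matrix (Fin (n + 1)) (Fin (n + 1)) ℂ) :
    Set (Matrix (Fin (n + 1)) (Fin (n + 1)) ℂ) :=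
  {x | ∃ b₁ b₂ : Matrix.GeneralLinearGroup (Fin (n + 1)) ℂ, P b₁ ∧ Q b₂ ∧
    x = (b₁ : Matrix (Fin (n + 1)) (Fin (n + 1)) ℂ) * g *
      (b₂ : Matrix (Fin (n + 1)) (Fin (n + 1)) ℂ)}

/-- The coordinate subspace `E_q = span {e_1, …, e_q}`. -/
def Esub (n : ℕ) (q : ℕ) : Submodule ℂ (Fin (n + 1) → ℂ) :=
  Submodule.span ℂ (e n '' {t : Fin (n + 1) | (t : ℕ) < q})

/-- The line `L = ℂ e_n`. -/
def Lline (n : ℕ) : Submodule ℂ (Fin (n + 1) → ℂ) :=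
  Submodule.span ℂ {e n (Fin.last n)}


variable {n : ℕ}

lemma e_apply (i t : Fin (n + 1)) : e n i t = if t = i then 1 else 0 :=
  Pi.single_apply i 1 t

lemma e_li : LinearIndependent ℂ (e n) := by
  have := (Pi.basisFun ℂ (Fin (n + 1))).linearIndependent
  have he : e n = ⇑(Pi.basisFun ℂ (Fin (n + 1))) := by
    funext i; rw [Pi.basisFun_apply]; rfl
  rwa [he]

lemma e_inj : Function.Injective (e n) := e_li.injective

lemma sum_single (x : Fin (n + 1) → ℂ) : x = ∑ t, x t • e n t := by
  funext s
  rw [Finset.sum_apply]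
  simp only [Pi.smul_apply, e_apply, smul_eq_mul, mul_ite, mul_one, mul_zero]
  rw [Finset.sum_ite_eq Finset.univ s x]
  simp

def coordSub (n : ℕ) (S : Set (Fin (n + 1))) : Submodule ℂ (Fin (n + 1) → ℂ) :=
  Submodule.pi Sᶜ (fun _ => ⊥)

lemma mem_coordSub {S : Set (Fin (n + 1))} {x : Fin (n + 1) → ℂ} :
    x ∈ coordSub n S ↔ ∀ t, t ∉ S → x t = 0 := by
  simp [coordSub, Submodule.mem_pi]

lemma e_mem_coordSub {S : Set (Fin (n + 1))} {t : Fin (n + 1)} :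
    e n t ∈ coordSub n S ↔ t ∈ S := by
  constructor
  · intro h
    by_contra ht
    have := mem_coordSub.1 h t ht
    simp [e_apply] at this
  · intro h
    rw [mem_coordSub]
    intro s hs
    rw [e_apply, if_neg (fun hh => hs (by rw [hh]; exact h))]

lemma span_e_image (S : Set (Fin (n + 1))) :
    Submodule.span ℂ (e n '' S) = coordSub n S := by
  apply le_antisymm
  · rw [Submodule.span_le]
    rintro _ ⟨t, ht, rfl⟩
    exact e_mem_coordSub.2 ht
  · intro x hx
    rw [sum_single x]
    apply Submodule.sum_mem
    intro t _
    by_cases hxt : x t = 0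
    · rw [hxt, zero_smul]; exact Submodule.zero_mem _
    · have htS : t ∈ S := by
        by_contra h
        exact hxt (mem_coordSub.1 hx t h)
      exact Submodule.smul_mem _ _ (Submodule.subset_span ⟨t, htS, rfl⟩)

lemma coordSub_inf (S T : Set (Fin (n + 1))) :
    coordSub n S ⊓ coordSub n T = coordSub n (S ∩ T) := by
  apply le_antisymm
  · rintro x ⟨h1, h2⟩
    rw [mem_coordSub]
    intro t ht
    rcases (by tauto : t ∉ S ∨ t ∉ T) with h | h
    · exact mem_coordSub.1 h1 t h
    · exact mem_coordSub.1 h2 t h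
  · intro x hx
    constructor
    · exact mem_coordSub.2 fun t ht => mem_coordSub.1 hx t (fun hh => ht hh.1)
    · exact mem_coordSub.2 fun t ht => mem_coordSub.1 hx t (fun hh => ht hh.2)

lemma finrank_coordSub (S : Set (Fin (n + 1))) :
    Module.finrank ℂ (coordSub n S) = S.ncard := by
  classical
  rw [← span_e_image]
  haveI : Fintype S := Fintype.ofFinite S
  have hli : LinearIndependent ℂ (fun t : S => e n t) :=
    e_li.comp Subtype.val Subtype.val_injective
  have hr : Set.range (fun t : S => e n t) = e n '' S := by
    rw [← Set.image_eq_range]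
  rw [← hr, finrank_span_eq_card hli, Set.ncard_eq_toFinset_card', Set.toFinset_card]

lemma Esub_eq (r : ℕ) : Esub n r = coordSub n {t | (t : ℕ) < r} := span_e_image _


/-- linear equivalence attached to a GL element -/
def glEquiv (g : Matrix.GeneralLinearGroup (Fin (n + 1)) ℂ) :
    (Fin (n + 1) → ℂ) ≃ₗ[ℂ] (Fin (n + 1) → ℂ) :=
  LinearEquiv.ofLinear
    (Matrix.mulVecLin (g : Matrix (Fin (n + 1)) (Fin (n + 1)) ℂ))
    (Matrix.mulVecLin ((g⁻¹ : Matrix.GeneralLinearGroup (Fin (n + 1)) ℂ) :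
      Matrix (Fin (n + 1)) (Fin (n + 1)) ℂ))
    (by rw [← Matrix.mulVecLin_mul, ← Units.val_mul, mul_inv_cancel, Units.val_one,
          Matrix.mulVecLin_one])
    (by rw [← Matrix.mulVecLin_mul, ← Units.val_mul, inv_mul_cancel, Units.val_one,
          Matrix.mulVecLin_one])

lemma glEquiv_coe (g : Matrix.GeneralLinearGroup (Fin (n + 1)) ℂ) :
    (glEquiv g : (Fin (n + 1) → ℂ) →ₗ[ℂ] (Fin (n + 1) → ℂ)) =
      Matrix.mulVecLin (g : Matrix (Fin (n + 1)) (Fin (n + 1)) ℂ) := rfl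

lemma finrank_map_gl (g : Matrix.GeneralLinearGroup (Fin (n + 1)) ℂ)
    (U : Submodule ℂ (Fin (n + 1) → ℂ)) :
    Module.finrank ℂ (U.map (Matrix.mulVecLin
      (g : Matrix (Fin (n + 1)) (Fin (n + 1)) ℂ))) = Module.finrank ℂ U := by
  rw [← glEquiv_coe]; exact LinearEquiv.finrank_map_eq _ _

lemma map_inf_gl (g : Matrix.GeneralLinearGroup (Fin (n + 1)) ℂ)
    (U W : Submodule ℂ (Fin (n + 1) → ℂ)) :
    (U ⊓ W).map (Matrix.mulVecLin (g : Matrix (Fin (n + 1)) (Fin (n + 1)) ℂ)) =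
      U.map (Matrix.mulVecLin (g : Matrix (Fin (n + 1)) (Fin (n + 1)) ℂ)) ⊓
      W.map (Matrix.mulVecLin (g : Matrix (Fin (n + 1)) (Fin (n + 1)) ℂ)) := by
  rw [← glEquiv_coe]
  exact Submodule.map_inf _ (glEquiv g).injective

lemma mulVecLin_e (g : Matrix (Fin (n+1)) (Fin (n+1)) ℂ) (t : Fin (n+1)) :
    Matrix.mulVecLin g (e n t) = fun s => g s t := by
  show g.mulVec (Pi.single t 1) = _
  rw [Matrix.mulVec_single]
  funext s; simp

lemma map_Esub (g : Matrix.GeneralLinearGroup (Fin (n + 1)) ℂ) (hg : InB n g) (r : ℕ) :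
    (Esub n r).map (Matrix.mulVecLin (g : Matrix (Fin (n + 1)) (Fin (n + 1)) ℂ)) =
      Esub n r := by
  apply Submodule.eq_of_le_of_finrank_eq
  · rw [Esub, Submodule.map_span, Submodule.span_le]
    rintro _ ⟨_, ⟨t, ht, rfl⟩, rfl⟩
    rw [mulVecLin_e]
    have hmem : (fun s => (g : Matrix (Fin (n+1)) (Fin (n+1)) ℂ) s t) ∈
        coordSub n {t : Fin (n+1) | (t : ℕ) < r} := by
      rw [mem_coordSub]
      intro s hs
      exact hg _ _ (show (t : ℕ) < (s : ℕ) from lt_of_lt_of_le ht (not_lt.1 hs))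
    rw [← Esub_eq] at hmem
    exact hmem
  · exact finrank_map_gl g _

/-- A flag fixed by all invertible diagonal matrices consists of coordinate subspaces. -/
lemma coord_of_Hfixed (W : Fin (n + 1) → Submodule ℂ (Fin (n + 1) → ℂ))
    (hfix : ∀ h : Matrix.GeneralLinearGroup (Fin (n + 1)) ℂ, InH n h →
      actFlag n h W = W) (q : Fin (n + 1)) :
    W q = coordSub n {t | e n t ∈ W q} := by
  classical
  have key : ∀ x ∈ W q, ∀ t : Fin (n + 1), x t • e n t ∈ W q := by
    intro x hx t
    set d : Fin (n + 1) → ℂ := fun s => if s = t then 2 else 1 with hd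
    set d' : Fin (n + 1) → ℂ := fun s => if s = t then (2:ℂ)⁻¹ else 1 with hd'
    have hdd : d * d' = 1 := by
      funext s; by_cases h : s = t <;> simp [hd, hd', h]
    have hdd' : d' * d = 1 := by rw [mul_comm] at hdd; exact hdd
    set h : Matrix.GeneralLinearGroup (Fin (n + 1)) ℂ :=
      ⟨Matrix.diagonal d, Matrix.diagonal d',
        by rw [Matrix.diagonal_mul_diagonal,
              show (fun i => d i * d' i) = d * d' from rfl, hdd]; exact Matrix.diagonal_one,
        by rw [Matrix.diagonal_mul_diagonal,
              show (fun i => d' i * d i) = d' * d from rfl, hdd']; exact Matrix.diagonal_one⟩ with hh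
    have hH : InH n h := by
      intro a b hab
      exact Matrix.diagonal_apply_ne d hab
    have hWq := congrFun (hfix h hH) q
    have hx2 : Matrix.mulVecLin (h : Matrix (Fin (n+1)) (Fin (n+1)) ℂ) x ∈ W q := by
      rw [← hWq]; exact Submodule.mem_map_of_mem hx
    have heq : Matrix.mulVecLin (h : Matrix (Fin (n+1)) (Fin (n+1)) ℂ) x - x
        = x t • e n t := by
      funext s
      show Matrix.mulVec (Matrix.diagonal d) x s - x s = _
      rw [Matrix.mulVec_diagonal]
      by_cases hs : s = t
      · subst hs
        simp [hd, e_apply]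
        ring
      · simp [hd, hs, e_apply]
    rw [← heq]
    exact Submodule.sub_mem _ hx2 hx
  apply le_antisymm
  · intro x hx
    rw [mem_coordSub]
    intro t ht
    by_contra hxt
    apply ht
    have := key x hx t
    have : e n t ∈ W q := by
      have h2 : (x t)⁻¹ • (x t • e n t) ∈ W q := Submodule.smul_mem _ _ this
      rwa [smul_smul, inv_mul_cancel₀ hxt, one_smul] at h2
    exact this
  · intro x hx
    rw [sum_single x]
    apply Submodule.sum_mem
    intro t _
    by_cases hxt : x t = 0
    · rw [hxt, zero_smul]; exact Submodule.zero_mem _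
    · have ht : e n t ∈ W q := by
        by_contra h
        exact hxt (mem_coordSub.1 hx t h)
      exact Submodule.smul_mem _ _ ht

lemma card_lt_succ_mem (S : Set (Fin (n + 1))) (t : Fin (n + 1)) (ht : t ∈ S) :
    {x ∈ S | (x : ℕ) < (t : ℕ) + 1}.ncard = {x ∈ S | (x : ℕ) < (t : ℕ)}.ncard + 1 := by
  have hset : {x ∈ S | (x : ℕ) < (t : ℕ) + 1} = insert t {x ∈ S | (x : ℕ) < (t : ℕ)} := by
    ext x
    simp only [Set.mem_setOf_eq, Set.mem_insert_iff]
    constructor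
    · rintro ⟨hxS, hx⟩
      rcases Nat.lt_succ_iff_lt_or_eq.1 hx with h | h
      · exact Or.inr ⟨hxS, h⟩
      · exact Or.inl (Fin.ext h)
    · rintro (rfl | ⟨hxS, hx⟩)
      · exact ⟨ht, Nat.lt_succ_self _⟩
      · exact ⟨hxS, Nat.lt_succ_of_lt hx⟩
  rw [hset, Set.ncard_insert_of_notMem (by simp) (Set.toFinite _)]

lemma card_lt_succ_not_mem (S : Set (Fin (n + 1))) (t : Fin (n + 1)) (ht : t ∉ S) :
    {x ∈ S | (x : ℕ) < (t : ℕ) + 1}.ncard = {x ∈ S | (x : ℕ) < (t : ℕ)}.ncard := by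
  congr 1
  ext x
  simp only [Set.mem_setOf_eq]
  constructor
  · rintro ⟨hxS, hx⟩
    rcases Nat.lt_succ_iff_lt_or_eq.1 hx with h | h
    · exact ⟨hxS, h⟩
    · exact absurd hxS (by rw [Fin.ext h]; exact ht)
  · rintro ⟨hxS, hx⟩
    exact ⟨hxS, Nat.lt_succ_of_lt hx⟩

lemma set_eq_of_counts (S S' : Set (Fin (n + 1)))
    (h : ∀ r : ℕ, {x ∈ S | (x : ℕ) < r}.ncard = {x ∈ S' | (x : ℕ) < r}.ncard) :
    S = S' := by
  have main : ∀ (A B : Set (Fin (n + 1))),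
      (∀ r : ℕ, {x ∈ A | (x : ℕ) < r}.ncard = {x ∈ B | (x : ℕ) < r}.ncard) →
      ∀ t, t ∈ A → t ∈ B := by
    intro A B hAB t htA
    by_contra htB
    have h2 := hAB ((t : ℕ) + 1)
    rw [card_lt_succ_mem A t htA, card_lt_succ_not_mem B t htB, hAB (t : ℕ)] at h2
    omega
  ext t
  exact ⟨main S S' h t, main S' S (fun r => (h r).symm) t⟩

/-- Uniqueness of H-fixed flags within a B-orbit. -/
lemma unique_Hfixed (V W W' : Fin (n + 1) → Submodule ℂ (Fin (n + 1) → ℂ))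
    (b b' : Matrix.GeneralLinearGroup (Fin (n + 1)) ℂ)
    (hb : InB n b) (hb' : InB n b')
    (hW : W = actFlag n b V) (hW' : W' = actFlag n b' V)
    (fixW : ∀ h : Matrix.GeneralLinearGroup (Fin (n + 1)) ℂ, InH n h → actFlag n h W = W)
    (fixW' : ∀ h : Matrix.GeneralLinearGroup (Fin (n + 1)) ℂ, InH n h → actFlag n h W' = W') :
    W = W' := by
  funext q
  have cenW := coord_of_Hfixed W fixW q
  have cenW' := coord_of_Hfixed W' fixW' q
  set S : Set (Fin (n + 1)) := {t | e n t ∈ W q} with hS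
  set S' : Set (Fin (n + 1)) := {t | e n t ∈ W' q} with hS'
  have hcount : ∀ (c : Matrix.GeneralLinearGroup (Fin (n + 1)) ℂ), InB n c →
      ∀ r : ℕ, Module.finrank ℂ ↥((actFlag n c V q) ⊓ Esub n r) =
        Module.finrank ℂ ↥(V q ⊓ Esub n r) := by
    intro c hc r
    have h1 : (actFlag n c V q) ⊓ Esub n r =
        ((V q) ⊓ Esub n r).map (Matrix.mulVecLin
          (c : Matrix (Fin (n + 1)) (Fin (n + 1)) ℂ)) := by
      rw [map_inf_gl, map_Esub c hc r]; rfl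
    rw [h1, finrank_map_gl]
  have key : ∀ r : ℕ, {x ∈ S | (x : ℕ) < r}.ncard = {x ∈ S' | (x : ℕ) < r}.ncard := by
    intro r
    have f1 : Module.finrank ℂ ↥(W q ⊓ Esub n r) = Module.finrank ℂ ↥(W' q ⊓ Esub n r) := by
      rw [hW, hW']
      exact (hcount b hb r).trans (hcount b' hb' r).symm
    have e1 : W q ⊓ Esub n r = coordSub n (S ∩ {t | (t : ℕ) < r}) := by
      rw [cenW, Esub_eq, coordSub_inf]
    have e2 : W' q ⊓ Esub n r = coordSub n (S' ∩ {t | (t : ℕ) < r}) := by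
      rw [cenW', Esub_eq, coordSub_inf]
    rw [e1, e2, finrank_coordSub, finrank_coordSub] at f1
    exact f1
  rw [cenW, cenW', set_eq_of_counts S S' key]

lemma diag_entry_ne_zero (h : Matrix.GeneralLinearGroup (Fin (n + 1)) ℂ)
    (hH : InH n h) (t : Fin (n + 1)) :
    (h : Matrix (Fin (n + 1)) (Fin (n + 1)) ℂ) t t ≠ 0 := by
  intro h0
  have hcol : Matrix.mulVecLin (h : Matrix (Fin (n + 1)) (Fin (n + 1)) ℂ) (e n t) = 0 := by
    rw [mulVecLin_e]
    funext s
    by_cases hs : s = t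
    · subst hs; exact h0
    · exact hH s t hs
  have h1 : (glEquiv h) (e n t) = (glEquiv h) 0 := by
    rw [map_zero]; exact hcol
  have h2 : e n t = 0 := (glEquiv h).injective h1
  have h3 := congrFun h2 t
  rw [e_apply, if_pos rfl] at h3
  exact one_ne_zero h3

lemma mulVecLin_diag_e (h : Matrix.GeneralLinearGroup (Fin (n + 1)) ℂ)
    (hH : InH n h) (t : Fin (n + 1)) :
    Matrix.mulVecLin (h : Matrix (Fin (n + 1)) (Fin (n + 1)) ℂ) (e n t) =
      ((h : Matrix (Fin (n + 1)) (Fin (n + 1)) ℂ) t t) • e n t := by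
  rw [mulVecLin_e]
  funext s
  by_cases hs : s = t
  · subst hs; simp [e_apply]
  · simp [e_apply, hs, hH s t hs]

/-- A flag spanned by standard basis vectors is fixed by every invertible diagonal matrix. -/
lemma Hfixed_of_e (u : Fin (n + 1) → Fin (n + 1) → ℂ)
    (hu : ∀ q, ∃ t, u q = e n t)
    (h : Matrix.GeneralLinearGroup (Fin (n + 1)) ℂ) (hH : InH n h) :
    actFlag n h (flagOf n u) = flagOf n u := by
  funext q
  show Submodule.map _ (Submodule.span ℂ (u '' {j | j ≤ q})) =
    Submodule.span ℂ (u '' {j | j ≤ q})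
  rw [Submodule.map_span]
  apply le_antisymm
  · rw [Submodule.span_le]
    rintro _ ⟨_, ⟨m, hm, rfl⟩, rfl⟩
    obtain ⟨t, ht⟩ := hu m
    rw [ht, mulVecLin_diag_e h hH t]
    exact Submodule.smul_mem _ _ (Submodule.subset_span ⟨m, hm, ht⟩)
  · rw [Submodule.span_le]
    rintro _ ⟨m, hm, rfl⟩
    obtain ⟨t, ht⟩ := hu m
    have hne := diag_entry_ne_zero h hH t
    have heq : u m = ((h : Matrix (Fin (n + 1)) (Fin (n + 1)) ℂ) t t)⁻¹ •
        Matrix.mulVecLin (h : Matrix (Fin (n + 1)) (Fin (n + 1)) ℂ) (u m) := by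
      rw [ht, mulVecLin_diag_e h hH t, smul_smul, inv_mul_cancel₀ hne, one_smul]
    rw [heq]
    exact Submodule.smul_mem _ _ (Submodule.subset_span ⟨u m, ⟨m, hm, rfl⟩, rfl⟩)

lemma finrank_flagOf (u : Fin (n + 1) → Fin (n + 1) → ℂ)
    (hu : LinearIndependent ℂ u) (q : Fin (n + 1)) :
    Module.finrank ℂ ↥(flagOf n u q) = (q : ℕ) + 1 := by
  classical
  show Module.finrank ℂ ↥(Submodule.span ℂ (u '' {j | j ≤ q})) = _
  have hli : LinearIndependent ℂ (fun m : ({j : Fin (n + 1) | j ≤ q} : Set _) => u ↑m) :=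
    hu.comp Subtype.val Subtype.val_injective
  have hr : u '' {j : Fin (n + 1) | j ≤ q} =
      Set.range (fun m : ({j : Fin (n + 1) | j ≤ q} : Set _) => u ↑m) :=
    Set.image_eq_range _ _
  rw [hr, finrank_span_eq_card hli]
  have hcard : Fintype.card ({j : Fin (n + 1) | j ≤ q} : Set _) =
      Fintype.card (Fin ((q : ℕ) + 1)) := by
    apply Fintype.card_congr
    exact {
      toFun := fun m => ⟨(m : Fin (n+1)).1, Nat.lt_succ_of_le m.2⟩
      invFun := fun m => ⟨⟨m.1, lt_of_le_of_lt (Nat.le_of_lt_succ m.2) q.2⟩,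
        Fin.mk_le_mk.2 (Nat.le_of_lt_succ m.2)⟩
      left_inv := fun m => by ext; rfl
      right_inv := fun m => by ext; rfl }
  rw [hcard, Fintype.card_fin]

lemma hat_ne_e (j t : Fin (n + 1)) (hj : j ≠ Fin.last n) : hatE n j ≠ e n t := by
  intro h
  by_cases hjt : j = t
  · have h2 : e n j (Fin.last n) + e n (Fin.last n) (Fin.last n) = e n t (Fin.last n) :=
      congrFun h _
    rw [e_apply, e_apply, e_apply, if_pos rfl,
      if_neg (fun hh : (Fin.last n) = j => hj hh.symm),
      if_neg (fun hh : (Fin.last n) = t => hj (hjt.trans hh.symm))] at h2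
    norm_num at h2
  · have h1 : e n j j + e n (Fin.last n) j = e n t j := congrFun h _
    rw [e_apply, e_apply, e_apply, if_pos rfl, if_neg hj,
      if_neg (fun hh : j = t => hjt hh)] at h1
    norm_num at h1

lemma sum_single_smul (v : Fin (n + 1) → Fin (n + 1) → ℂ) (w : Fin (n + 1)) :
    ∑ s, (Pi.single w (1:ℂ) : Fin (n+1) → ℂ) s • v s = v w := by
  classical
  rw [Finset.sum_eq_single w]
  · rw [Pi.single_eq_same, one_smul]
  · intro s _ hs
    rw [Pi.single_eq_of_ne hs, zero_smul]
  · intro hw; exact absurd (Finset.mem_univ w) hw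

lemma dep3 (v : Fin (n + 1) → Fin (n + 1) → ℂ) (hv : LinearIndependent ℂ v)
    (a b c : Fin (n + 1)) (hab : a ≠ b) (hac : a ≠ c) (hbc : b ≠ c) :
    v a ≠ v b + v c := by
  classical
  intro h
  set g : Fin (n + 1) → ℂ :=
    Pi.single a 1 - Pi.single b 1 - Pi.single c 1 with hg
  have hsum : ∑ s, g s • v s = 0 := by
    have : ∀ s, g s • v s = (Pi.single a (1:ℂ) : Fin (n+1) → ℂ) s • v s
        - (Pi.single b (1:ℂ) : Fin (n+1) → ℂ) s • v s
        - (Pi.single c (1:ℂ) : Fin (n+1) → ℂ) s • v s := by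
      intro s
      rw [hg]
      simp only [Pi.sub_apply, sub_smul]
    simp only [this]
    rw [Finset.sum_sub_distrib, Finset.sum_sub_distrib,
      sum_single_smul, sum_single_smul, sum_single_smul, h]
    abel
  have hga := Fintype.linearIndependent_iff.1 hv g hsum a
  rw [hg] at hga
  rw [Pi.sub_apply, Pi.sub_apply, Pi.single_eq_same,
    Pi.single_eq_of_ne hab, Pi.single_eq_of_ne hac] at hga
  norm_num at hga

set_option maxHeartbeats 1000000 in
lemma part1 (n : ℕ) (v vt : Fin (n + 1) → Fin (n + 1) → ℂ)
    (hstd : IsStdForm n v)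
    (k : ℕ) (hk : 0 < k) (i j : Fin k → Fin (n + 1)) (p : Fin (n + 1))
    (hi : StrictAnti i) (hj : StrictMono j)
    (hhat : ∀ m : Fin k, j m ≠ Fin.last n ∧ v (i m) = hatE n (j m))
    (hp : v p = e n (Fin.last n))
    (hrest : ∀ q : Fin (n + 1), (∀ m : Fin k, q ≠ i m) → ∃ t, v q = e n t)
    (ht1 : vt (i ⟨k - 1, Nat.sub_lt hk Nat.one_pos⟩) = e n (Fin.last n))
    (ht2 : ∀ (m : Fin k) (h : (m : ℕ) + 1 < k), vt (i m) = e n (j ⟨(m : ℕ) + 1, h⟩))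
    (ht3 : vt p = e n (j ⟨0, hk⟩))
    (ht4 : ∀ q : Fin (n + 1), (∀ m : Fin k, q ≠ i m) → q ≠ p → vt q = v q) :
    (∀ q, ∃ t, vt q = e n t) ∧ flagOf n vt ∈ orbit n (InB n) (flagOf n v) := by
  classical
  obtain ⟨hvli, _, _, hstd4, _⟩ := hstd
  have vinj : Function.Injective v := hvli.injective
  set kk : Fin k := ⟨k - 1, Nat.sub_lt hk Nat.one_pos⟩ with hkk
  have hjne : ∀ m : Fin k, j m ≠ Fin.last n := fun m => (hhat m).1
  have hvi : ∀ m : Fin k, v (i m) = hatE n (j m) := fun m => (hhat m).2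
  have hip : ∀ m : Fin k, i m ≠ p := by
    intro m h
    exact hat_ne_e (j m) (Fin.last n) (hjne m) ((hvi m).symm.trans (by rw [h, hp]))
  have hilt : ∀ m : Fin k, i m < p := by
    intro m
    rcases lt_trichotomy (i m) p with h | h | h
    · exact h
    · exact absurd h (hip m)
    · exfalso
      obtain ⟨t, hv⟩ := hstd4 p (i m) hp h
      exact hat_ne_e (j m) t (hjne m) ((hvi m).symm.trans hv)
  have hnlast : ∀ q : Fin (n + 1), q ≠ p → ∀ t, v q = e n t → t ≠ Fin.last n := by
    intro q hq t hv ht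
    exact hq (vinj (hv.trans (by rw [ht, ← hp])))
  have hnotj : ∀ q : Fin (n + 1), (∀ m : Fin k, q ≠ i m) → q ≠ p →
      ∀ t, v q = e n t → ∀ m : Fin k, t ≠ j m := by
    intro q hqi hqp t hv m ht
    apply dep3 v hvli (i m) q p (fun h => hqi m h.symm) (hip m) hqp
    rw [hvi m, hv, hp, ht]
    rfl
  -- classification of the values of vt
  have hval : ∀ m : Fin (n + 1),
      (m = i kk ∧ vt m = e n (Fin.last n)) ∨
      (∃ s : Fin k, vt m = e n (j s) ∧
        (((s : ℕ) = 0 ∧ m = p) ∨ (∃ s' : Fin k, (s : ℕ) = (s' : ℕ) + 1 ∧ m = i s'))) ∨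
      ((∀ s : Fin k, m ≠ i s) ∧ m ≠ p ∧ vt m = v m ∧
        ∃ t, v m = e n t ∧ t ≠ Fin.last n ∧ ∀ s : Fin k, t ≠ j s) := by
    intro m
    by_cases h1 : ∃ s : Fin k, m = i s
    · obtain ⟨s, rfl⟩ := h1
      by_cases h2 : (s : ℕ) + 1 < k
      · exact Or.inr (Or.inl ⟨⟨(s : ℕ) + 1, h2⟩, ht2 s h2, Or.inr ⟨s, rfl, rfl⟩⟩)
      · left
        have hs : s = kk := by
          apply Fin.ext
          have h3 := s.2
          simp only [hkk]
          omega
        exact ⟨by rw [hs], by rw [hs]; exact ht1⟩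
    · by_cases h2 : m = p
      · subst h2
        exact Or.inr (Or.inl ⟨⟨0, hk⟩, ht3, Or.inl ⟨rfl, rfl⟩⟩)
      · push_neg at h1
        obtain ⟨t, hvt⟩ := hrest m h1
        exact Or.inr (Or.inr ⟨h1, h2, ht4 m h1 h2, t, hvt,
          hnlast m h2 t hvt, hnotj m h1 h2 t hvt⟩)
  have vtinj : Function.Injective vt := by
    intro a b hab
    rcases hval a with ⟨ha1, ha2⟩ | ⟨s, hs1, hs2⟩ | ⟨ha1, ha2, ha3, t, htv, htl, htj⟩ <;>
      rcases hval b with ⟨hb1, hb2⟩ | ⟨s2, hs21, hs22⟩ | ⟨hb1, hb2, hb3, t2, htv2, htl2, htj2⟩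
    · rw [ha1, hb1]
    · exfalso
      rw [ha2, hs21] at hab
      exact hjne s2 (e_inj hab).symm
    · exfalso
      rw [ha2, hb3, htv2] at hab
      exact htl2 (e_inj hab).symm
    · exfalso
      rw [hs1, hb2] at hab
      exact hjne s (e_inj hab)
    · rw [hs1, hs21] at hab
      have hss : s = s2 := hj.injective (e_inj hab)
      subst hss
      rcases hs2 with ⟨h01, rfl⟩ | ⟨s', hss', rfl⟩ <;>
        rcases hs22 with ⟨h02, h03⟩ | ⟨s2', hss2', h03⟩
      · exact h03.symm
      · omega
      · omega
      · have : s' = s2' := Fin.ext (by omega)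
        rw [h03, this]
    · exfalso
      rw [hs1, hb3, htv2] at hab
      exact htj2 s (e_inj hab).symm
    · exfalso
      rw [ha3, htv, hb2] at hab
      exact htl (e_inj hab)
    · exfalso
      rw [ha3, htv, hs21] at hab
      exact htj s2 (e_inj hab)
    · rw [ha3, hb3] at hab
      exact vinj hab
  have fact1 : ∀ q, ∃ t, vt q = e n t := by
    intro q
    rcases hval q with ⟨_, h⟩ | ⟨s, h, _⟩ | ⟨_, _, h3, t, h4, _⟩
    · exact ⟨_, h⟩
    · exact ⟨_, h⟩
    · exact ⟨t, h3.trans h4⟩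
  have hvtli : LinearIndependent ℂ vt := by
    choose f hf using fact1
    have hfe : vt = (e n) ∘ f := funext hf
    rw [hfe]
    exact e_li.comp f (fun a b hfe2 => vtinj (by rw [hf a, hf b, hfe2]))
  -- the upper triangular matrix c
  set PJ : Fin (n + 1) → Fin (n + 1) → Prop := fun r s =>
    ∃ m m' : Fin k, (m' : ℕ) = (m : ℕ) + 1 ∧ r = j m ∧ s = j m' with hPJ
  set cmat : Matrix (Fin (n + 1)) (Fin (n + 1)) ℂ := Matrix.of fun r s =>
    if r = s then 1 else if s = Fin.last n ∧ r = j kk then 1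
    else if PJ r s then -1 else 0 with hcmat
  have jlt : ∀ m : Fin k, j m < Fin.last n :=
    fun m => lt_of_le_of_ne (Fin.le_last _) (hjne m)
  have col_n : Matrix.mulVecLin cmat (e n (Fin.last n)) =
      e n (Fin.last n) + e n (j kk) := by
    rw [mulVecLin_e]
    funext r
    show cmat r (Fin.last n) = (e n (Fin.last n) + e n (j kk)) r
    rw [hcmat, Matrix.of_apply, Pi.add_apply, e_apply, e_apply]
    by_cases hr1 : r = Fin.last n
    · subst hr1
      rw [if_pos rfl, if_pos rfl, if_neg (fun h => hjne kk h.symm)]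
      norm_num
    · rw [if_neg hr1, if_neg hr1]
      by_cases hr2 : r = j kk
      · rw [if_pos ⟨rfl, hr2⟩, if_pos hr2]
        norm_num
      · rw [if_neg (fun h => hr2 h.2), if_neg hr2,
          if_neg (fun h => by obtain ⟨a, a', _, _, hsa⟩ := h; exact hjne a' hsa.symm)]
        norm_num
  have col_j : ∀ m m' : Fin k, (m' : ℕ) = (m : ℕ) + 1 →
      Matrix.mulVecLin cmat (e n (j m')) = e n (j m') - e n (j m) := by
    intro m m' hmm
    have hne : j m ≠ j m' := fun h => by
      have := hj.injective h; omega
    rw [mulVecLin_e]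
    funext r
    show cmat r (j m') = (e n (j m') - e n (j m)) r
    rw [hcmat, Matrix.of_apply, Pi.sub_apply, e_apply, e_apply]
    by_cases hr1 : r = j m'
    · rw [if_pos hr1, if_pos hr1, if_neg (fun h : r = j m => hne (h.symm.trans hr1))]
      norm_num
    · rw [if_neg hr1, if_neg hr1]
      by_cases hr2 : r = j m
      · rw [if_neg (fun h => hjne m' h.1),
          if_pos (show PJ r (j m') from ⟨m, m', hmm, hr2, rfl⟩), if_pos hr2]
        norm_num
      · rw [if_neg (fun h => hjne m' h.1), if_neg hr2]
        rw [if_neg (fun h : PJ r (j m') => by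
          obtain ⟨a, a', ha, hra, hsa⟩ := h
          have ha' : a' = m' := hj.injective hsa.symm
          subst ha'
          have : a = m := Fin.ext (by omega)
          subst this
          exact hr2 hra)]
        norm_num
  have col_other : ∀ t : Fin (n + 1), t ≠ Fin.last n →
      (∀ a a' : Fin k, (a' : ℕ) = (a : ℕ) + 1 → t ≠ j a') →
      Matrix.mulVecLin cmat (e n t) = e n t := by
    intro t h1 h2
    rw [mulVecLin_e]
    funext r
    show cmat r t = e n t r
    rw [hcmat, Matrix.of_apply, e_apply]
    by_cases hr : r = t
    · rw [if_pos hr, if_pos hr]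
    · rw [if_neg hr, if_neg hr, if_neg (fun h => h1 h.1)]
      rw [if_neg (fun h : PJ r t => by
        obtain ⟨a, a', ha, _, hsa⟩ := h
        exact h2 a a' ha hsa)]
  have htri : cmat.BlockTriangular id := by
    intro r s hrs
    have hrs' : s < r := hrs
    show cmat r s = 0
    rw [hcmat, Matrix.of_apply]
    rw [if_neg (fun h : r = s => absurd hrs' (by rw [h]; exact lt_irrefl s)),
      if_neg (fun h : s = Fin.last n ∧ r = j kk => by
        rw [h.1, h.2] at hrs'
        exact absurd hrs' (not_lt.2 (le_of_lt (jlt kk)))),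
      if_neg (fun h : PJ r s => by
        obtain ⟨a, a', ha, rfl, rfl⟩ := h
        have : j a < j a' := hj (show a < a' from by
          rw [Fin.lt_def]; omega)
        exact absurd hrs' (not_lt.2 (le_of_lt this)))]
  have hdiag : ∀ t, cmat t t = 1 := by
    intro t
    show cmat t t = 1
    rw [hcmat, Matrix.of_apply, if_pos rfl]
  have hdet : cmat.det = 1 := by
    rw [Matrix.det_of_upperTriangular htri]
    rw [Finset.prod_congr rfl (fun t _ => hdiag t)]
    exact Finset.prod_const_one
  have hunit : IsUnit cmat := (Matrix.isUnit_iff_isUnit_det cmat).2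
    (by rw [hdet]; exact isUnit_one)
  haveI : Invertible cmat := cmat.invertibleOfIsUnitDet (by rw [hdet]; exact isUnit_one)
  set cu : Matrix.GeneralLinearGroup (Fin (n + 1)) ℂ := hunit.unit with hcudef
  have hcu : (cu : Matrix (Fin (n + 1)) (Fin (n + 1)) ℂ) = cmat := hunit.unit_spec
  have hBinv : InB n cu⁻¹ := by
    intro a b hba
    have h1 : ((cu⁻¹ : Matrix.GeneralLinearGroup (Fin (n + 1)) ℂ) :
        Matrix (Fin (n + 1)) (Fin (n + 1)) ℂ) = cmat⁻¹ := by
      rw [Matrix.coe_units_inv, hcu]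
    rw [h1]
    exact Matrix.blockTriangular_inv_of_blockTriangular htri hba
  -- mapping the tilde flag onto the original flag
  have hflag : ∀ q : Fin (n + 1),
      (flagOf n vt q).map (Matrix.mulVecLin cmat) = flagOf n v q := by
    intro q
    apply Submodule.eq_of_le_of_finrank_eq
    · show Submodule.map _ (Submodule.span ℂ (vt '' {m | m ≤ q})) ≤ _
      rw [Submodule.map_span, Submodule.span_le]
      rintro _ ⟨_, ⟨m, (hm : m ≤ q), rfl⟩, rfl⟩
      have memv : ∀ s : Fin (n + 1), s ≤ q → v s ∈ flagOf n v q :=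
        fun s hs => Submodule.subset_span ⟨s, hs, rfl⟩
      rcases hval m with ⟨hm1, hm2⟩ | ⟨s, hvs, ⟨hs0, hmp⟩ | ⟨s', hss', hmi⟩⟩ |
          ⟨hmi, hmp, hvteq, t, hvt, htlast, htjr⟩
      · rw [hm2, col_n]
        have : e n (Fin.last n) + e n (j kk) = v (i kk) := by
          rw [hvi kk, hatE]; abel
        rw [this]
        exact memv _ (hm1 ▸ hm)
      · -- m = p, vt m = e (j s) with s = 0
        rw [hvs, col_other (j s) (hjne s)
          (fun a a' ha h => by
            have : s = a' := hj.injective h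
            omega)]
        have : e n (j s) = v (i s) - v p := by
          rw [hvi s, hp, hatE]; abel
        rw [this]
        exact Submodule.sub_mem _ (memv _ (le_trans (le_of_lt (hilt s)) (hmp ▸ hm)))
          (memv _ (hmp ▸ hm))
      · -- m = i s', vt m = e (j s) with s = s' + 1
        rw [hvs, col_j s' s hss']
        have : e n (j s) - e n (j s') = v (i s) - v (i s') := by
          rw [hvi s, hvi s', hatE, hatE]; abel
        rw [this]
        have hlt : i s < i s' := hi (show s' < s from by rw [Fin.lt_def]; omega)
        exact Submodule.sub_mem _ (memv _ (le_trans (le_of_lt hlt) (hmi ▸ hm)))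
          (memv _ (hmi ▸ hm))
      · rw [hvteq, hvt, col_other t htlast (fun a a' _ h => htjr a' h), ← hvt]
        exact memv m hm
    · rw [← hcu, finrank_map_gl cu, finrank_flagOf vt hvtli q, finrank_flagOf v hvli q]
  refine ⟨fact1, cu⁻¹, hBinv, ?_⟩
  funext q
  show flagOf n vt q = Submodule.map (Matrix.mulVecLin
    ((cu⁻¹ : Matrix.GeneralLinearGroup (Fin (n + 1)) ℂ) :
      Matrix (Fin (n + 1)) (Fin (n + 1)) ℂ)) (flagOf n v q)
  have hinv1 : ((cu⁻¹ : Matrix.GeneralLinearGroup (Fin (n + 1)) ℂ) :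
      Matrix (Fin (n + 1)) (Fin (n + 1)) ℂ) * cmat = 1 := by
    rw [← hcu, ← Units.val_mul, inv_mul_cancel, Units.val_one]
  calc flagOf n vt q
      = Submodule.map (Matrix.mulVecLin (((cu⁻¹ : Matrix.GeneralLinearGroup (Fin (n + 1)) ℂ) :
          Matrix (Fin (n + 1)) (Fin (n + 1)) ℂ) * cmat)) (flagOf n vt q) := by
        rw [hinv1, Matrix.mulVecLin_one, Submodule.map_id]
    _ = Submodule.map (Matrix.mulVecLin ((cu⁻¹ : Matrix.GeneralLinearGroup (Fin (n + 1)) ℂ) :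
          Matrix (Fin (n + 1)) (Fin (n + 1)) ℂ))
          (Submodule.map (Matrix.mulVecLin cmat) (flagOf n vt q)) := by
        rw [Matrix.mulVecLin_mul, Submodule.map_comp]
    _ = Submodule.map (Matrix.mulVecLin ((cu⁻¹ : Matrix.GeneralLinearGroup (Fin (n + 1)) ℂ) :
          Matrix (Fin (n + 1)) (Fin (n + 1)) ℂ)) (flagOf n v q) := by
        rw [hflag q]

/-- for a standard-form flag `F` with hat vectors (at positions
`i_k < ⋯ < i_1`, hat indices `j_1 < ⋯ < j_k`, `e_n` at position `p`), the flag `F̃`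
(obtained by replacing position `i_k` by `e_n`, position `i_m` by `e_{j_{m+1}}` for
`m = 1, …, k-1`, and position `p` by `e_{j_1}`) lies in `B·F`, is fixed by every
invertible diagonal matrix, and is the unique `H`-fixed flag in `B·F`.
(Here `m : Fin k` encodes the paper's index `m + 1 ∈ {1, …, k}`.) -/
theorem statement2 (n : ℕ) (hn : 1 ≤ n) (v vt : Fin (n + 1) → Fin (n + 1) → ℂ)
    (hstd : IsStdForm n v)
    (k : ℕ) (hk : 0 < k) (i j : Fin k → Fin (n + 1)) (p : Fin (n + 1))
    (hi : StrictAnti i) (hj : StrictMono j)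
    (hhat : ∀ m : Fin k, j m ≠ Fin.last n ∧ v (i m) = hatE n (j m))
    (hp : v p = e n (Fin.last n))
    (hrest : ∀ q : Fin (n + 1), (∀ m : Fin k, q ≠ i m) → ∃ t, v q = e n t)
    (ht1 : vt (i ⟨k - 1, Nat.sub_lt hk Nat.one_pos⟩) = e n (Fin.last n))
    (ht2 : ∀ (m : Fin k) (h : (m : ℕ) + 1 < k), vt (i m) = e n (j ⟨(m : ℕ) + 1, h⟩))
    (ht3 : vt p = e n (j ⟨0, hk⟩))
    (ht4 : ∀ q : Fin (n + 1), (∀ m : Fin k, q ≠ i m) → q ≠ p → vt q = v q) :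
    flagOf n vt ∈ orbit n (InB n) (flagOf n v) ∧
    (∀ h : Matrix.GeneralLinearGroup (Fin (n + 1)) ℂ, InH n h →
      actFlag n h (flagOf n vt) = flagOf n vt) ∧
    (∀ W ∈ orbit n (InB n) (flagOf n v),
      (∀ h : Matrix.GeneralLinearGroup (Fin (n + 1)) ℂ, InH n h → actFlag n h W = W) →
        W = flagOf n vt) := by
  obtain ⟨fact1, horb⟩ := part1 n v vt hstd k hk i j p hi hj hhat hp hrest ht1 ht2 ht3 ht4
  have hfix : ∀ h : Matrix.GeneralLinearGroup (Fin (n + 1)) ℂ, InH n h →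
      actFlag n h (flagOf n vt) = flagOf n vt :=
    fun h hH => Hfixed_of_e vt fact1 h hH
  refine ⟨horb, hfix, ?_⟩
  intro W hW hfixW
  obtain ⟨b, hb, hWb⟩ := hW
  obtain ⟨b', hb', hWb'⟩ := horb
  exact unique_Hfixed (flagOf n v) W (flagOf n vt) b b' hb hb' hWb hWb' hfixW hfix

end ShareshianPairs
end
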